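/- There exists a topological space with unique sequential limits that is not k₂-Hausdorff; that is, a space X in which every convergent sequence has a unique limit, yet the diagonal Δ_X is not k₂-closed in X × X. -/

import Mathlib

open Set Filter Topology

universe u

/-- A subset `C` of a space `X` is k₁-closed provided for every compact subset `K` of `X`,
the intersection `C ∩ K` is closed in the subspace topology on `K`. -/
def IsK1Closed {X : Type u} [TopologicalSpace X] (C : Set X) : Prop :=
  ∀ K : Set X, IsCompact K → IsClosed ((Subtype.val : K → X) ⁻¹' C)

/-- A space is k₁-Hausdorff provided its diagonal is k₁-closed in its square. -/
def K1Hausdorff (X : Type u) [TopologicalSpace X] : Prop :=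
  IsK1Closed {p : X × X | p.1 = p.2}

/-- A space is KC provided every compact subset is closed. -/
def KCSpace (X : Type u) [TopologicalSpace X] : Prop :=
  ∀ K : Set X, IsCompact K → IsClosed K

/-- A space `X` is weakly Hausdorff provided for every compact Hausdorff space `K` and
continuous `f : K → X`, the image of `f` is closed in `X`. -/
def WeaklyHausdorff (X : Type u) [TopologicalSpace X] : Prop :=
  ∀ (K : Type u) [TopologicalSpace K] [CompactSpace K] [T2Space K]
    (f : K → X), Continuous f → IsClosed (Set.range f)

/-- A subset `C` of `X` is k₂-closed provided for every compact Hausdorff space `K` and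
continuous `f : K → X`, the preimage `f ⁻¹' C` is closed in `K`. -/
def IsK2Closed {X : Type u} [TopologicalSpace X] (C : Set X) : Prop :=
  ∀ (K : Type u) [TopologicalSpace K] [CompactSpace K] [T2Space K]
    (f : K → X), Continuous f → IsClosed (f ⁻¹' C)

/-- A space is k₂-Hausdorff provided its diagonal is k₂-closed in its square. -/
def K2Hausdorff (X : Type u) [TopologicalSpace X] : Prop :=
  IsK2Closed {p : X × X | p.1 = p.2}

/-- A space has unique sequential limits provided every convergent sequence has a unique limit. -/
def UniqueSequentialLimits (X : Type u) [TopologicalSpace X] : Prop :=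
  ∀ (a : ℕ → X) (l₀ l₁ : X),
    Filter.Tendsto a Filter.atTop (nhds l₀) →
    Filter.Tendsto a Filter.atTop (nhds l₁) → l₀ = l₁

noncomputable section USK2
open Ordinal


abbrev KK : Type := ((ω_ 1) + 1).ToType

def ee : Set.Iio ((ω_ 1) + 1) ≃o KK := Ordinal.ToType.mk

lemma omega1_mem : (ω_ 1 : Ordinal) < (ω_ 1) + 1 := by
  rw [Ordinal.add_one_eq_succ]; exact Order.lt_succ _

noncomputable instance : OrderBot KK where
  bot := ee ⟨0, (Ordinal.omega_pos 1).trans omega1_mem⟩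
  bot_le x := by
    have h0 : (0:Ordinal) ∈ Set.Iio ((ω_ 1) + 1) := (Ordinal.omega_pos 1).trans omega1_mem
    have : ee ⟨0, h0⟩ ≤ ee (ee.symm x) :=
      ee.le_iff_le.2 (show (0:Ordinal) ≤ _ from zero_le)
    simpa using this

noncomputable instance : OrderTop KK where
  top := ee ⟨ω_ 1, omega1_mem⟩
  le_top x := by
    have h : (ee.symm x : Ordinal) ≤ ω_ 1 := Order.lt_succ_iff.1 (by rw [← Ordinal.add_one_eq_succ]; exact (ee.symm x).2)
    have : ee (ee.symm x) ≤ ee ⟨ω_ 1, omega1_mem⟩ :=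
      ee.le_iff_le.2 (show ((ee.symm x : Ordinal)) ≤ ω_ 1 from h)
    simpa using this

noncomputable instance : ConditionallyCompleteLinearOrderBot KK :=
  WellFoundedLT.conditionallyCompleteLinearOrderBot KK

instance : TopologicalSpace KK := Preorder.topology KK
instance : OrderTopology KK := ⟨rfl⟩
noncomputable instance : BoundedOrder KK :=
  { (inferInstance : OrderTop KK), (inferInstance : OrderBot KK) with }

instance : CompactSpace KK := ⟨by rw [← Set.Icc_bot_top]; exact isCompact_Icc⟩

example : T2Space KK := inferInstance


section Lemmas


lemma bot_lt_top_KK : (⊥ : KK) < ⊤ := by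
  have h0 : (0:Ordinal) ∈ Set.Iio ((ω_ 1) + 1) := (Ordinal.omega_pos 1).trans omega1_mem
  have : ee ⟨0, h0⟩ < ee ⟨ω_ 1, omega1_mem⟩ :=
    ee.lt_iff_lt.2 (show (0:Ordinal) < ω_ 1 from Ordinal.omega_pos 1)
  exact this

lemma not_isOpen_top_KK : ¬ IsOpen ({(⊤ : KK)} : Set KK) := by
  intro h
  obtain ⟨l, hl, hsub⟩ :=
    exists_Ioc_subset_of_mem_nhds (h.mem_nhds rfl) ⟨⊥, bot_lt_top_KK⟩
  -- l < ⊤, find x with l < x < ⊤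
  set ol : Set.Iio ((ω_ 1) + 1) := ee.symm l with hol
  have holt : (ol : Ordinal) < ω_ 1 := by
    have : ee.symm l < ee.symm ⊤ := ee.symm.lt_iff_lt.2 hl
    have h2 : ee.symm (ee ⟨ω_ 1, omega1_mem⟩) = ⟨ω_ 1, omega1_mem⟩ := ee.symm_apply_apply _
    rw [show (⊤:KK) = ee ⟨ω_ 1, omega1_mem⟩ from rfl, h2] at this
    exact this
  have hsucclt : (ol : Ordinal) + 1 < ω_ 1 := by
    rw [Ordinal.add_one_eq_succ]
    exact (Cardinal.isSuccLimit_omega 1).succ_lt holt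
  have hmem : (ol : Ordinal) + 1 ∈ Set.Iio ((ω_ 1) + 1) := hsucclt.trans omega1_mem
  set x : KK := ee ⟨(ol : Ordinal) + 1, hmem⟩ with hx
  have hlx : l < x := by
    have : ee ol < ee ⟨(ol : Ordinal) + 1, hmem⟩ :=
      ee.lt_iff_lt.2 (show (ol : Ordinal) < (ol:Ordinal) + 1 from Ordinal.add_one_eq_succ (ol:Ordinal) ▸ Order.lt_succ (ol:Ordinal))
    simpa [hol] using this
  have hxt : x ≠ ⊤ := by
    intro hxe
    have := ee.injective (hxe : ee ⟨(ol : Ordinal) + 1, hmem⟩ = ee ⟨ω_ 1, omega1_mem⟩)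
    have := congrArg Subtype.val this
    simp at this
    exact absurd this (ne_of_lt hsucclt)
  exact hxt (hsub ⟨hlx, le_top⟩)

lemma no_seq_tendsto_top_KK (v : ℕ → KK) (hne : ∀ᶠ n in atTop, v n ≠ ⊤)
    (hv : Tendsto v atTop (𝓝 (⊤ : KK))) : False := by
  classical
  set o : ℕ → Ordinal := fun n => if v n = ⊤ then 0 else (ee.symm (v n) : Ordinal) with ho
  have hoa : ∀ n, o n < (Cardinal.aleph 1).ord := by
    intro n
    rw [Cardinal.ord_aleph]
    by_cases h : v n = ⊤
    · simp [ho, h, Ordinal.omega_pos 1]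
    · simp only [ho, h, if_false]
      have hle : (ee.symm (v n) : Ordinal) ≤ ω_ 1 :=
        Order.lt_succ_iff.1 (by rw [← Ordinal.add_one_eq_succ]; exact (ee.symm (v n)).2)
      rcases hle.lt_or_eq with h1 | h2
      · exact h1
      · exfalso; apply h
        have : ee.symm (v n) = ⟨ω_ 1, omega1_mem⟩ := Subtype.ext h2
        have := congrArg ee this
        exact (by simpa using this : v n = ee ⟨ω_ 1, omega1_mem⟩)
  have hs : iSup o < (Cardinal.aleph 1).ord := by
    rw [Cardinal.ord_aleph]; exact Ordinal.iSup_lt_omega_one (fun n => by simpa [Cardinal.ord_aleph] using hoa n)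
  have hs1 : iSup o < ω_ 1 := by rwa [Cardinal.ord_aleph] at hs
  have hmem : iSup o ∈ Set.Iio ((ω_ 1) + 1) := hs1.trans omega1_mem
  set b : KK := ee ⟨iSup o, hmem⟩ with hb
  have hbt : b < ⊤ := ee.lt_iff_lt.2 (show iSup o < ω_ 1 from hs1)
  have hIoi : Set.Ioi b ∈ 𝓝 (⊤:KK) := isOpen_Ioi.mem_nhds hbt
  obtain ⟨n, hn1, hn2⟩ := ((hv.eventually_mem hIoi).and hne).exists
  apply absurd hn1
  simp only [Set.mem_Ioi, not_lt]
  have h1 : o n = (ee.symm (v n) : Ordinal) := by simp [ho, hn2]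
  have h2 : (ee.symm (v n) : Ordinal) ≤ iSup o := h1 ▸ Ordinal.le_iSup o n
  have : ee (ee.symm (v n)) ≤ ee ⟨iSup o, hmem⟩ := ee.le_iff_le.2 h2
  simpa using this

end Lemmas

def XX : Type := KK ⊕ Unit

def jl : KK → XX := Sum.inl
def pt : XX := Sum.inr ()

instance XX.topologicalSpace : TopologicalSpace XX where
  IsOpen V := IsOpen (jl ⁻¹' V) ∧ (pt ∈ V → IsOpen (insert (⊤ : KK) (jl ⁻¹' V)))
  isOpen_univ := ⟨isOpen_univ, fun _ => by simp [Set.insert_eq_of_mem]⟩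
  isOpen_inter V W hV hW := by
    refine ⟨hV.1.inter hW.1, fun hmem => ?_⟩
    rw [Set.preimage_inter, Set.insert_inter_distrib]
    exact (hV.2 hmem.1).inter (hW.2 hmem.2)
  isOpen_sUnion S hS := by
    constructor
    · rw [Set.preimage_sUnion]
      exact isOpen_biUnion fun s hs => (hS s hs).1
    · rintro ⟨s₀, hs₀S, hmem⟩
      have key : insert (⊤ : KK) (jl ⁻¹' ⋃₀ S) =
          insert (⊤ : KK) (jl ⁻¹' s₀) ∪ (jl ⁻¹' ⋃₀ S) := by
        ext y
        simp only [Set.mem_insert_iff, Set.mem_union, Set.preimage_sUnion, Set.mem_iUnion,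
          Set.mem_preimage]
        constructor
        · rintro (rfl | h)
          · exact Or.inl (Or.inl rfl)
          · exact Or.inr h
        · rintro ((rfl | h) | h)
          · exact Or.inl rfl
          · exact Or.inr ⟨s₀, hs₀S, h⟩
          · exact Or.inr h
      rw [key]
      refine ((hS s₀ hs₀S).2 hmem).union ?_
      rw [Set.preimage_sUnion]
      exact isOpen_biUnion fun s hs => (hS s hs).1

lemma isOpen_XX_iff {V : Set XX} :
    IsOpen V ↔ IsOpen (jl ⁻¹' V) ∧ (pt ∈ V → IsOpen (insert (⊤ : KK) (jl ⁻¹' V))) :=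
  Iff.rfl

lemma continuous_jl : Continuous jl :=
  continuous_def.2 fun _ hV => hV.1

noncomputable def gg : KK → XX := fun k => if k = ⊤ then pt else jl k

lemma continuous_gg : Continuous gg := by
  classical
  refine continuous_def.2 fun V hV => ?_
  by_cases hmem : pt ∈ V
  · have : gg ⁻¹' V = insert (⊤ : KK) (jl ⁻¹' V) := by
      ext k
      simp only [gg, Set.mem_preimage, Set.mem_insert_iff]
      by_cases hk : k = ⊤ <;> simp [hk, hmem]
    rw [this]
    exact hV.2 hmem
  · have : gg ⁻¹' V = (jl ⁻¹' V) \ {⊤} := by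
      ext k
      simp only [gg, Set.mem_preimage, Set.mem_diff, Set.mem_singleton_iff]
      by_cases hk : k = ⊤ <;> simp [hk, hmem]
    rw [this]
    exact hV.1.sdiff isClosed_singleton

noncomputable def ppi : XX → KK := Sum.elim id fun _ => (⊤ : KK)

lemma continuous_ppi : Continuous ppi := by
  refine continuous_def.2 fun U hU => ?_
  rw [isOpen_XX_iff]
  have h1 : jl ⁻¹' (ppi ⁻¹' U) = U := rfl
  refine ⟨by rw [h1]; exact hU, fun hmem => ?_⟩
  have hmem' : (⊤ : KK) ∈ U := hmem
  rw [h1, Set.insert_eq_of_mem hmem']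
  exact hU

lemma ppi_jl (k : KK) : ppi (jl k) = k := rfl
lemma ppi_pt : ppi pt = ⊤ := rfl

lemma ppi_eq_top {x : XX} (h : ppi x = ⊤) : x = jl ⊤ ∨ x = pt := by
  obtain k | u := x
  · exact Or.inl (by rw [show k = ⊤ from h]; rfl)
  · exact Or.inr (by cases u; rfl)

lemma jl_inj {a b : KK} : jl a = jl b ↔ a = b :=
  ⟨fun h => by injection h, fun h => congrArg jl h⟩

lemma not_both (u : ℕ → XX) (h0 : Tendsto u atTop (𝓝 (jl (⊤:KK))))
    (h1 : Tendsto u atTop (𝓝 pt)) : False := by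
  have hVopen : IsOpen {x : XX | x ≠ jl ⊤} := by
    rw [isOpen_XX_iff]
    constructor
    · have h : jl ⁻¹' {x : XX | x ≠ jl ⊤} = {(⊤:KK)}ᶜ := by
        ext k
        simp only [Set.mem_preimage, Set.mem_setOf_eq, Set.mem_compl_iff,
          Set.mem_singleton_iff]
        exact not_congr jl_inj
      rw [h]; exact isOpen_compl_singleton
    · intro _
      have h : insert (⊤:KK) (jl ⁻¹' {x : XX | x ≠ jl ⊤}) = Set.univ := by
        ext k
        simp only [Set.mem_insert_iff, Set.mem_preimage, Set.mem_setOf_eq,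
          Set.mem_univ, iff_true]
        by_cases hk : k = ⊤
        · exact Or.inl hk
        · exact Or.inr fun h => hk (jl_inj.1 h)
      rw [h]; exact isOpen_univ
  have hWopen : IsOpen {x : XX | x ≠ pt} := by
    rw [isOpen_XX_iff]
    refine ⟨?_, fun hmem => absurd rfl hmem⟩
    have h : jl ⁻¹' {x : XX | x ≠ pt} = Set.univ := by
      ext k; exact iff_of_true (fun h => Sum.inl_ne_inr h) trivial
    rw [h]; exact isOpen_univ
  have hV : ∀ᶠ n in atTop, u n ≠ jl ⊤ :=
    h1.eventually_mem (hVopen.mem_nhds (fun h => Sum.inl_ne_inr h.symm))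
  have hW : ∀ᶠ n in atTop, u n ≠ pt :=
    h0.eventually_mem (hWopen.mem_nhds (fun h => Sum.inl_ne_inr h))
  have hvt : Tendsto (fun n => ppi (u n)) atTop (𝓝 (⊤:KK)) := by
    have := (continuous_ppi.tendsto (jl ⊤)).comp h0
    simpa [Function.comp_def, ppi_jl] using this
  refine no_seq_tendsto_top_KK (fun n => ppi (u n)) ?_ hvt
  filter_upwards [hV, hW] with n h1n h2n
  intro h
  rcases ppi_eq_top h with h' | h'
  · exact h1n h'
  · exact h2n h'

lemma usXX : ∀ (a : ℕ → XX) (l₀ l₁ : XX),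
    Filter.Tendsto a Filter.atTop (nhds l₀) →
    Filter.Tendsto a Filter.atTop (nhds l₁) → l₀ = l₁ := by
  intro u l₀ l₁ h₀ h₁
  have hπ : ppi l₀ = ppi l₁ :=
    tendsto_nhds_unique ((continuous_ppi.tendsto l₀).comp h₀)
      ((continuous_ppi.tendsto l₁).comp h₁)
  obtain k₀ | u₀ := l₀ <;> obtain k₁ | u₁ := l₁
  · exact congrArg Sum.inl (hπ : k₀ = k₁)
  · exfalso
    cases u₁
    have hk : k₀ = ⊤ := hπ
    exact not_both u (hk ▸ h₀) h₁
  · exfalso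
    cases u₀
    have hk : k₁ = ⊤ := hπ.symm
    exact not_both u (hk ▸ h₁) h₀
  · cases u₀; cases u₁; rfl

lemma notk2XX : ¬ ∀ (K : Type) [TopologicalSpace K] [CompactSpace K] [T2Space K]
    (f : K → XX × XX), Continuous f → IsClosed (f ⁻¹' {p : XX × XX | p.1 = p.2}) := by
  intro hk2
  have hcont : Continuous (fun k : KK => (jl k, gg k)) :=
    continuous_jl.prodMk continuous_gg
  have hcl := hk2 KK (fun k : KK => (jl k, gg k)) hcont
  have hset : (fun k : KK => (jl k, gg k)) ⁻¹' {p : XX × XX | p.1 = p.2}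
      = {(⊤:KK)}ᶜ := by
    ext k
    simp only [Set.mem_preimage, Set.mem_setOf_eq, Set.mem_compl_iff,
      Set.mem_singleton_iff]
    constructor
    · intro h hk
      rw [hk] at h
      simp only [gg, if_pos rfl] at h
      exact (Sum.inl_ne_inr : (Sum.inl ⊤ : KK ⊕ Unit) ≠ Sum.inr ()) (by simpa [jl, pt] using h)
    · intro hk
      simp [gg, hk]
  rw [hset] at hcl
  exact not_isOpen_top_KK (by simpa using hcl.isOpen_compl)

end USK2


/-- There is a space with unique sequential limits that is not k₂-Hausdorff. -/
theorem exists_uniqueSequentialLimits_not_k2Hausdorff :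
    ∃ (X : Type) (_ : TopologicalSpace X), UniqueSequentialLimits X ∧ ¬ K2Hausdorff X := by
  exact ⟨XX, inferInstance, usXX, fun h => notk2XX h⟩
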